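/- Assume hypotheses (H2) and (H4) hold and q⁻ + 1 > p⁺. Then there exist λ* > 0, t > 0 and M > 0 such that for every λ ∈ (0, λ*) and every u ∈ H with ‖u‖ = t one has J_λ(u) ≥ M. -/

import Mathlib

/-- The norm ‖u‖ = (Σ_{k=1}^{T+1} |Δu(k−1)|²)^{1/2} on H. -/
noncomputable def normH (T : ℕ) (u : ℕ → ℝ) : ℝ :=
  Real.sqrt (∑ k ∈ Finset.Icc 1 (T + 1), |u k - u (k - 1)| ^ 2)

/-- F(k,t) = ∫₀ᵗ f(k,τ) dτ. -/
noncomputable def Fint (f : ℕ → ℝ → ℝ) (k : ℕ) (t : ℝ) : ℝ :=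
  ∫ τ in (0:ℝ)..t, f k τ

/-- The functional J_λ(u) = Σ_{k=1}^{T+1} (1/p(k−1))|Δu(k−1)|^{p(k−1)} − λ Σ_{k=1}^{T} F(k,u(k)). -/
noncomputable def Jlam (T : ℕ) (p : ℕ → ℝ) (f : ℕ → ℝ → ℝ) (lam : ℝ) (u : ℕ → ℝ) : ℝ :=
  (∑ k ∈ Finset.Icc 1 (T + 1), (1 / p (k - 1)) * |u k - u (k - 1)| ^ p (k - 1))
    - lam * ∑ k ∈ Finset.Icc 1 T, Fint f k (u k)

theorem stmt13 (T : ℕ) (hT : 1 ≤ T) (p : ℕ → ℝ) (hp : ∀ k ≤ T + 1, 1 < p k)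
    (q : ℕ → ℝ) (hq : ∀ k, 1 ≤ k → k ≤ T → 0 < q k)
    (pp : ℝ) (hpp : IsGreatest (p '' Set.Icc 0 (T + 1)) pp)
    (qm : ℝ) (hqm : IsLeast (q '' Set.Icc 1 T) qm)
    (f : ℕ → ℝ → ℝ) (hf : ∀ k, 1 ≤ k → k ≤ T → Continuous (f k))
    -- Hypothesis (H2)
    (a₁ b₁ : ℕ → ℝ) (ha₁ : ∀ k, 1 ≤ k → k ≤ T → 0 < a₁ k)
    (hH2 : ∀ k, 1 ≤ k → k ≤ T → ∀ t : ℝ, a₁ k * |t| ^ q k + b₁ k ≤ |f k t|)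
    -- Hypothesis (H4)
    (c₁ : ℕ → ℝ) (hc₁ : ∀ k, 1 ≤ k → k ≤ T → 0 < c₁ k)
    (hH4 : ∀ k, 1 ≤ k → k ≤ T → ∀ t : ℝ, |f k t| ≤ c₁ k * |t| ^ q k)
    (hpq : pp < qm + 1) :
    ∃ lamStar > (0:ℝ), ∃ t > (0:ℝ), ∃ M > (0:ℝ), ∀ lam : ℝ, 0 < lam → lam < lamStar →
      ∀ u : ℕ → ℝ, u 0 = 0 → u (T + 1) = 0 → normH T u = t →
        M ≤ Jlam T p f lam u := by
  have hT1 : (0:ℝ) < (T:ℝ) + 1 := by positivity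
  set t : ℝ := 1 / ((T:ℝ) + 1) with ht_def
  have ht : 0 < t := by positivity
  have htT : ((T:ℝ) + 1) * t = 1 := by rw [ht_def]; field_simp
  have ht1 : t ≤ 1 := by rw [ht_def, div_le_one hT1]; linarith [Nat.cast_nonneg (α := ℝ) T]
  have hsq : 0 < Real.sqrt ((T:ℝ) + 1) := Real.sqrt_pos.mpr hT1
  set c : ℝ := t / Real.sqrt ((T:ℝ) + 1) with hc_def
  have hc : 0 < c := div_pos ht hsq
  have hc2 : ((T:ℝ) + 1) * c ^ 2 = t ^ 2 := by
    rw [hc_def, div_pow, Real.sq_sqrt hT1.le]; field_simp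
  have hpp1 : 1 < pp := by
    obtain ⟨k, hk, hkeq⟩ := hpp.1
    exact hkeq ▸ hp k hk.2
  have hpp0 : 0 < pp := by linarith
  set A : ℝ := (1 / pp) * c ^ pp with hA_def
  have hcpp : 0 < c ^ pp := Real.rpow_pos_of_pos hc pp
  have hA : 0 < A := by positivity
  set B : ℝ := ∑ k ∈ Finset.Icc 1 T, c₁ k with hB_def
  have hB : 0 < B := Finset.sum_pos (fun k hk => hc₁ k (Finset.mem_Icc.mp hk).1 (Finset.mem_Icc.mp hk).2)
    ⟨1, Finset.mem_Icc.mpr ⟨le_refl 1, hT⟩⟩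
  refine ⟨A / (2 * B), by positivity, t, ht, A / 2, by positivity, ?_⟩
  intro lam hlam hlam2 u hu0 huT hnorm
  -- the sum of squares equals t^2
  have hsum_nonneg : (0:ℝ) ≤ ∑ k ∈ Finset.Icc 1 (T + 1), |u k - u (k - 1)| ^ 2 :=
    Finset.sum_nonneg fun k _ => by positivity
  have hsumsq : ∑ k ∈ Finset.Icc 1 (T + 1), |u k - u (k - 1)| ^ 2 = t ^ 2 := by
    have := hnorm
    rw [normH] at this
    rw [← this, Real.sq_sqrt hsum_nonneg]
  -- each difference is at most t
  have hdiff_le : ∀ j ∈ Finset.Icc 1 (T + 1), |u j - u (j - 1)| ≤ t := by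
    intro j hj
    have h1 : |u j - u (j - 1)| ^ 2 ≤ t ^ 2 := by
      rw [← hsumsq]
      exact Finset.single_le_sum (f := fun k => |u k - u (k - 1)| ^ 2) (fun k _ => by positivity) hj
    nlinarith [abs_nonneg (u j - u (j - 1))]
  -- some difference is at least c
  have hex : ∃ j ∈ Finset.Icc 1 (T + 1), c ≤ |u j - u (j - 1)| := by
    by_contra hcon
    push_neg at hcon
    have hlt : ∑ k ∈ Finset.Icc 1 (T + 1), |u k - u (k - 1)| ^ 2
        < ∑ k ∈ Finset.Icc 1 (T + 1), c ^ 2 := by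
      apply Finset.sum_lt_sum_of_nonempty ⟨1, Finset.mem_Icc.mpr ⟨le_refl 1, by omega⟩⟩
      intro k hk
      have := hcon k hk
      nlinarith [abs_nonneg (u k - u (k - 1))]
    rw [Finset.sum_const, Nat.card_Icc] at hlt
    simp only [Nat.add_sub_cancel, nsmul_eq_mul] at hlt
    rw [hsumsq] at hlt
    push_cast at hlt
    nlinarith
  obtain ⟨j, hj, hcj⟩ := hex
  have hjm : j - 1 ≤ T + 1 := by
    have := (Finset.mem_Icc.mp hj).2; omega
  -- first sum lower bound
  have hS : A ≤ ∑ k ∈ Finset.Icc 1 (T + 1), (1 / p (k - 1)) * |u k - u (k - 1)| ^ p (k - 1) := by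
    have hterm : A ≤ (1 / p (j - 1)) * |u j - u (j - 1)| ^ p (j - 1) := by
      set x := |u j - u (j - 1)| with hx_def
      have hx0 : 0 < x := lt_of_lt_of_le hc hcj
      have hx1 : x ≤ 1 := le_trans (hdiff_le j hj) ht1
      have hpj : 1 < p (j - 1) := hp _ hjm
      have hple : p (j - 1) ≤ pp := hpp.2 ⟨j - 1, ⟨Nat.zero_le _, hjm⟩, rfl⟩
      have h1 : c ^ pp ≤ x ^ pp := Real.rpow_le_rpow hc.le hcj hpp0.le
      have h2 : x ^ pp ≤ x ^ p (j - 1) :=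
        Real.rpow_le_rpow_of_exponent_ge hx0 hx1 hple
      have h3 : (1 : ℝ) / pp ≤ 1 / p (j - 1) :=
        one_div_le_one_div_of_le (by linarith) hple
      have hxp : 0 < x ^ p (j - 1) := Real.rpow_pos_of_pos hx0 _
      calc A = (1 / pp) * c ^ pp := hA_def
        _ ≤ (1 / pp) * x ^ p (j - 1) := by
            apply mul_le_mul_of_nonneg_left (le_trans h1 h2) (by positivity)
        _ ≤ (1 / p (j - 1)) * x ^ p (j - 1) := mul_le_mul_of_nonneg_right h3 hxp.le
    refine le_trans hterm (Finset.single_le_sum (f := fun k => (1 / p (k - 1)) * |u k - u (k - 1)| ^ p (k - 1)) (fun k hk => ?_) hj)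
    have hpk : 1 < p (k - 1) := by
      have := (Finset.mem_Icc.mp hk).2
      exact hp _ (by omega)
    have := Real.rpow_nonneg (abs_nonneg (u k - u (k - 1))) (p (k - 1))
    positivity
  -- bound on |u k|
  have huk : ∀ k ∈ Finset.Icc 1 T, |u k| ≤ 1 := by
    intro k hk
    obtain ⟨hk1, hk2⟩ := Finset.mem_Icc.mp hk
    have htel : u k = ∑ j ∈ Finset.range k, (u (j + 1) - u j) := by
      rw [Finset.sum_range_sub u k, hu0, sub_zero]
    calc |u k| = |∑ j ∈ Finset.range k, (u (j + 1) - u j)| := by rw [htel]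
      _ ≤ ∑ j ∈ Finset.range k, |u (j + 1) - u j| := Finset.abs_sum_le_sum_abs _ _
      _ ≤ ∑ _j ∈ Finset.range k, t := by
          apply Finset.sum_le_sum
          intro j hjr
          have hjk := Finset.mem_range.mp hjr
          have := hdiff_le (j + 1) (Finset.mem_Icc.mpr ⟨by omega, by omega⟩)
          simpa using this
      _ = (k : ℝ) * t := by rw [Finset.sum_const]; simp
      _ ≤ ((T:ℝ) + 1) * t := by
          apply mul_le_mul_of_nonneg_right _ ht.le
          push_cast; exact_mod_cast by exact_mod_cast Nat.cast_le.mpr (by omega : k ≤ T + 1)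
      _ = 1 := htT
  -- bound on Fint
  have hFb : ∀ k ∈ Finset.Icc 1 T, |Fint f k (u k)| ≤ c₁ k := by
    intro k hk
    obtain ⟨hk1, hk2⟩ := Finset.mem_Icc.mp hk
    have hbound : ∀ τ ∈ Set.uIoc (0:ℝ) (u k), ‖f k τ‖ ≤ c₁ k := by
      intro τ hτ
      have hτabs : |τ| ≤ |u k| := by
        rcases Set.mem_uIoc.mp hτ with ⟨h1, h2⟩ | ⟨h1, h2⟩
        · rw [abs_of_pos h1]; exact le_trans h2 (le_abs_self _)
        · rw [abs_of_nonpos h2]; calc -τ ≤ -(u k) := by linarith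
            _ ≤ |u k| := neg_le_abs _
      have h1 : |τ| ^ q k ≤ |u k| ^ q k :=
        Real.rpow_le_rpow (abs_nonneg _) hτabs (hq k hk1 hk2).le
      have h2 : |u k| ^ q k ≤ 1 :=
        Real.rpow_le_one (abs_nonneg _) (huk k hk) (hq k hk1 hk2).le
      calc ‖f k τ‖ = |f k τ| := rfl
        _ ≤ c₁ k * |τ| ^ q k := hH4 k hk1 hk2 τ
        _ ≤ c₁ k * 1 := by
            apply mul_le_mul_of_nonneg_left (le_trans h1 h2) (hc₁ k hk1 hk2).le
        _ = c₁ k := mul_one _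
    have := intervalIntegral.norm_integral_le_of_norm_le_const hbound
    calc |Fint f k (u k)| = ‖∫ τ in (0:ℝ)..(u k), f k τ‖ := rfl
      _ ≤ c₁ k * |u k - 0| := this
      _ = c₁ k * |u k| := by rw [sub_zero]
      _ ≤ c₁ k * 1 := mul_le_mul_of_nonneg_left (le_trans (huk k hk) le_rfl) (hc₁ k hk1 hk2).le
      _ = c₁ k := mul_one _
  -- bound on the G sum
  have hG : |∑ k ∈ Finset.Icc 1 T, Fint f k (u k)| ≤ B := by
    calc |∑ k ∈ Finset.Icc 1 T, Fint f k (u k)|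
        ≤ ∑ k ∈ Finset.Icc 1 T, |Fint f k (u k)| := Finset.abs_sum_le_sum_abs _ _
      _ ≤ ∑ k ∈ Finset.Icc 1 T, c₁ k := Finset.sum_le_sum hFb
      _ = B := hB_def.symm
  -- conclude
  have hlG : lam * ∑ k ∈ Finset.Icc 1 T, Fint f k (u k) ≤ lam * B := by
    apply mul_le_mul_of_nonneg_left (le_trans (le_abs_self _) hG) hlam.le
  have hlB : lam * B < A / 2 := by
    have := mul_lt_mul_of_pos_right hlam2 hB
    rw [div_mul_eq_mul_div, mul_comm] at this
    calc lam * B < A / (2 * B) * B := mul_lt_mul_of_pos_right hlam2 hB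
      _ = A / 2 := by field_simp
  rw [Jlam]
  linarith
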